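/- For the complete graph K_n with n ≥ 2, GC(K_n) = 2. -/
import Mathlib


open SimpleGraph Finset

variable {V : Type*} [Fintype V] [DecidableEq V]

/-- `S` is a dominating set of the graph `G`. -/
def IsDomSet (G : SimpleGraph V) (S : Finset V) : Prop :=
  ∀ v : V, v ∈ S ∨ ∃ u ∈ S, G.Adj u v

/-- `S` is a global dominating set of `G`: it dominates both `G` and its complement. -/
def IsGlobalDomSet (G : SimpleGraph V) (S : Finset V) : Prop :=
  IsDomSet G S ∧ IsDomSet Gᶜ S

/-- Disjoint sets `A` and `B` form a global coalition in `G`. -/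
def IsGlobalCoalition (G : SimpleGraph V) (A B : Finset V) : Prop :=
  Disjoint A B ∧ ¬ IsGlobalDomSet G A ∧ ¬ IsGlobalDomSet G B ∧ IsGlobalDomSet G (A ∪ B)

/-- `π` is a global coalition partition (gc-partition) of `G`. -/
def IsGCPartition (G : SimpleGraph V) (π : Finpartition (Finset.univ : Finset V)) : Prop :=
  ∀ A ∈ π.parts, ¬ IsGlobalDomSet G A ∧ ∃ B ∈ π.parts, B ≠ A ∧ IsGlobalCoalition G A B

/-- The global coalition number `GC(G)`: the maximum number of parts in a gc-partition of `G`. -/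
noncomputable def globalCoalitionNumber (G : SimpleGraph V) : ℕ :=
  sSup {n | ∃ π : Finpartition (Finset.univ : Finset V), IsGCPartition G π ∧ π.parts.card = n}

lemma gds_top_iff (S : Finset V) : IsGlobalDomSet (⊤ : SimpleGraph V) S ↔ S = Finset.univ := by
  constructor
  · rintro ⟨-, h2⟩
    ext v
    simp only [Finset.mem_univ, iff_true]
    rcases h2 v with h | ⟨u, hu, hadj⟩
    · exact h
    · simp [compl_adj] at hadj
  · rintro rfl
    exact ⟨fun v => Or.inl (Finset.mem_univ v), fun v => Or.inl (Finset.mem_univ v)⟩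

theorem gc_completeGraph (n : ℕ) (hn : 2 ≤ n) :
    globalCoalitionNumber (⊤ : SimpleGraph (Fin n)) = 2 := by
  set a : Fin n := ⟨0, by omega⟩ with ha
  set b : Fin n := ⟨1, by omega⟩ with hb
  have hab : a ≠ b := by simp [ha, hb, Fin.ext_iff]
  set A : Finset (Fin n) := {a} with hA
  set B : Finset (Fin n) := Finset.univ.erase a with hB
  have hbB : b ∈ B := by simp [hB, Ne.symm hab]
  have hAne : A ≠ Finset.univ := by
    intro h
    have : b ∈ A := h ▸ Finset.mem_univ _
    exact hab ((Finset.mem_singleton.mp this).symm)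
  have hBne : B ≠ Finset.univ := by
    intro h
    have : a ∈ B := h ▸ Finset.mem_univ _
    simp [hB] at this
  have hdisj : Disjoint A B := by simp [hA, hB, Finset.disjoint_left]
  have hAB : A ∪ B = Finset.univ := by
    ext v; by_cases h : v = a <;> simp [hA, hB, h]
  have hABne : A ≠ B := by
    intro h
    have : a ∈ B := h ▸ Finset.mem_singleton_self a
    simp [hB] at this
  have hA0 : A ≠ ⊥ := by simp [hA]
  have hB0 : B ≠ ⊥ := by
    intro h
    rw [h] at hbB; simp at hbB
  set π : Finpartition (Finset.univ : Finset (Fin n)) :=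
    { parts := {A, B}
      supIndep := by
        rw [Finset.supIndep_pair hABne]
        exact hdisj
      sup_parts := by
        simp only [Finset.sup_insert, Finset.sup_singleton, id]
        exact hAB
      bot_notMem := by
        simp only [Finset.mem_insert, Finset.mem_singleton]
        rintro (h | h)
        · exact hA0 h.symm
        · exact hB0 h.symm } with hπ
  have hgc : IsGCPartition (⊤ : SimpleGraph (Fin n)) π := by
    intro C hC
    have hC' : C = A ∨ C = B := by simpa [hπ] using hC
    have coalAB : IsGlobalCoalition (⊤ : SimpleGraph (Fin n)) A B :=
      ⟨hdisj, by simp [gds_top_iff, hAne], by simp [gds_top_iff, hBne],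
        (gds_top_iff _).mpr hAB⟩
    have coalBA : IsGlobalCoalition (⊤ : SimpleGraph (Fin n)) B A :=
      ⟨hdisj.symm, by simp [gds_top_iff, hBne], by simp [gds_top_iff, hAne],
        (gds_top_iff _).mpr (by rw [Finset.union_comm]; exact hAB)⟩
    rcases hC' with rfl | rfl
    · exact ⟨by simp [gds_top_iff, hAne], B, by simp [hπ], Ne.symm hABne, coalAB⟩
    · exact ⟨by simp [gds_top_iff, hBne], A, by simp [hπ], hABne, coalBA⟩
  have hset : {m | ∃ σ : Finpartition (Finset.univ : Finset (Fin n)),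
      IsGCPartition (⊤ : SimpleGraph (Fin n)) σ ∧ σ.parts.card = m} = {2} := by
    ext m
    simp only [Set.mem_setOf_eq, Set.mem_singleton_iff]
    constructor
    · rintro ⟨σ, hσ, rfl⟩
      have huniv : (Finset.univ : Finset (Fin n)).Nonempty := ⟨a, Finset.mem_univ _⟩
      obtain ⟨P, hP⟩ := σ.parts_nonempty (by simpa using huniv.ne_empty)
      obtain ⟨-, Q, hQ, hQP, hdis, -, -, hPQ⟩ := hσ P hP
      rw [gds_top_iff] at hPQ
      have hsub : σ.parts ⊆ {P, Q} := by
        intro C hC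
        obtain ⟨x, hx⟩ := σ.nonempty_of_mem_parts hC
        have hxPQ : x ∈ P ∪ Q := hPQ ▸ Finset.mem_univ x
        rcases Finset.mem_union.mp hxPQ with h | h
        · have : C = P := by
            by_contra hne
            have := (σ.disjoint hC hP hne).le_bot (Finset.mem_inter.mpr ⟨hx, h⟩)
            simp at this
          simp [this]
        · have : C = Q := by
            by_contra hne
            have := (σ.disjoint hC hQ hne).le_bot (Finset.mem_inter.mpr ⟨hx, h⟩)
            simp at this
          simp [this]
      have h2 : ({P, Q} : Finset (Finset (Fin n))).card = 2 :=
        Finset.card_pair (Ne.symm hQP)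
      have hle : σ.parts.card ≤ 2 := h2 ▸ Finset.card_le_card hsub
      have hge : 2 ≤ σ.parts.card := by
        have hss : ({P, Q} : Finset (Finset (Fin n))) ⊆ σ.parts := by
          intro C hC
          rcases Finset.mem_insert.mp hC with rfl | hC
          · exact hP
          · exact Finset.mem_singleton.mp hC ▸ hQ
        exact h2 ▸ Finset.card_le_card hss
      omega
    · rintro rfl
      exact ⟨π, hgc, by simp [hπ, Finset.card_pair hABne]⟩
  rw [globalCoalitionNumber, hset, csSup_singleton]
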